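/- Let R > 0 and M > 0. There exist constants R₀ ≥ R and C > 0, depending only on R and M, with the following property: for every τ ∈ ℂ with |τ| > 1 and |1/(1 − τ)| ≥ R₀, and every holomorphic map f on {w ∈ ℂ : |w| ≥ R} satisfying |f(w) − (τw + 1)| ≤ M/|w| for all |w| ≥ R, there exists b ∈ ℂ with |b| ≥ R, f(b) = b, and |b − 1/(1 − τ)| ≤ C. -/

import Mathlib

open Complex Set Metric Filter Topology

/-- The Rouché-theorem claim of Theorem 5.3, Case (b): a holomorphic map
`f(w) = τw + 1 + O(1/w)` on `{|w| ≥ R}`, with `|τ| > 1` and `1/(1−τ)` of large modulus,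
has a fixed point `b = 1/(1−τ) + O(1)`; the constants `R₀` and `C` depend only on `R`
and the constant `M` in the error bound. -/
theorem rouche_fixed_point
    (R M : ℝ) (hR : 0 < R) (hM : 0 < M) :
    ∃ R₀ : ℝ, R ≤ R₀ ∧ ∃ C : ℝ, 0 < C ∧
      ∀ τ : ℂ, 1 < ‖τ‖ → R₀ ≤ ‖1 / (1 - τ)‖ →
        ∀ f : ℂ → ℂ,
          DifferentiableOn ℂ f {w : ℂ | R ≤ ‖w‖} →
          (∀ w : ℂ, R ≤ ‖w‖ → ‖f w - (τ * w + 1)‖ ≤ M / ‖w‖) →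
          ∃ b : ℂ, R ≤ ‖b‖ ∧ f b = b ∧ ‖b - 1 / (1 - τ)‖ ≤ C := by
  refine ⟨2*R + 40*M, by linarith, 2*M, by linarith, ?_⟩
  intro τ hτ hA f hf hfb
  set a : ℂ := 1/(1-τ) with ha
  have h1τ : (1:ℂ) - τ ≠ 0 := by
    intro h
    have : τ = 1 := by linear_combination -h
    rw [this] at hτ; simp at hτ
  -- the error term
  set e : ℂ → ℂ := fun w => f w - (τ * w + 1) with he_def
  have he : DifferentiableOn ℂ e {w : ℂ | R ≤ ‖w‖} := by
    apply hf.sub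
    exact (((differentiable_id.const_mul τ).add_const 1)).differentiableOn
  -- the auxiliary map whose fixed points are fixed points of f
  set Φ : ℂ → ℂ := fun w => a * (1 + e w) with hΦ_def
  set s : Set ℂ := closedBall a (2*M) with hs_def
  have hanorm : 2*R + 40*M ≤ ‖a‖ := hA
  have hs_norm : ∀ b ∈ s, 2*R + 38*M ≤ ‖b‖ := by
    intro b hb
    rw [hs_def, mem_closedBall, dist_eq_norm] at hb
    have h1 : ‖a‖ - ‖b‖ ≤ ‖b - a‖ := by
      rw [norm_sub_rev]; exact norm_sub_norm_le a b
    linarith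
  have hsR : ∀ b ∈ s, R ≤ ‖b‖ := fun b hb => by
    have := hs_norm b hb; linarith
  have hopen : IsOpen {w : ℂ | R < ‖w‖} := isOpen_lt continuous_const continuous_norm
  have hsub : {w : ℂ | R < ‖w‖} ⊆ {w : ℂ | R ≤ ‖w‖} := by
    intro w hw
    simp only [mem_setOf_eq] at hw ⊢
    exact le_of_lt hw
  have heat : ∀ b ∈ s, DifferentiableAt ℂ e b := by
    intro b hb
    have hb' : b ∈ {w : ℂ | R < ‖w‖} := by
      have := hs_norm b hb; simp only [mem_setOf_eq]; linarith
    exact (he.mono hsub).differentiableAt (hopen.mem_nhds hb')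
  -- Cauchy estimate for the derivative of e
  have hderiv : ∀ b ∈ s, ‖deriv e b‖ ≤ 4*M/‖b‖^2 := by
    intro b hb
    have hb38 : 2*R + 38*M ≤ ‖b‖ := hs_norm b hb
    have hbpos : 0 < ‖b‖ := by linarith
    have hr : 0 < ‖b‖/2 := by linarith
    have hball : closedBall b (‖b‖/2) ⊆ {w : ℂ | R ≤ ‖w‖} := by
      intro z hz
      rw [mem_closedBall, dist_eq_norm] at hz
      have h1 : ‖b‖ - ‖z‖ ≤ ‖z - b‖ := by
        rw [norm_sub_rev]; exact norm_sub_norm_le b z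
      simp only [mem_setOf_eq]; linarith
    have hd : DiffContOnCl ℂ e (ball b (‖b‖/2)) := by
      apply DifferentiableOn.diffContOnCl
      rw [closure_ball b hr.ne']
      exact he.mono hball
    have hbound : ∀ z ∈ sphere b (‖b‖/2), ‖e z‖ ≤ M/(‖b‖/2) := by
      intro z hz
      rw [mem_sphere, dist_eq_norm] at hz
      have h1 : ‖b‖ - ‖z‖ ≤ ‖z - b‖ := by
        rw [norm_sub_rev]; exact norm_sub_norm_le b z
      have hzR : R ≤ ‖z‖ := by rw [hz] at h1; linarith
      refine (hfb z hzR).trans ?_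
      apply div_le_div_of_nonneg_left hM.le hr
      rw [hz] at h1; linarith
    have := norm_deriv_le_of_forall_mem_sphere_norm_le hr hd hbound
    calc ‖deriv e b‖ ≤ (M/(‖b‖/2))/(‖b‖/2) := this
      _ = 4*M/‖b‖^2 := by field_simp; ring
  -- Φ maps s into itself
  have hmaps : MapsTo Φ s s := by
    intro b hb
    have hb38 : 2*R + 38*M ≤ ‖b‖ := hs_norm b hb
    have hbpos : 0 < ‖b‖ := by linarith
    rw [hs_def, mem_closedBall, dist_eq_norm]
    have h1 : Φ b - a = a * e b := by rw [hΦ_def]; ring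
    rw [h1, norm_mul]
    have h2 : ‖e b‖ ≤ M/‖b‖ := hfb b (hsR b hb)
    have h3 : ‖a‖ * ‖e b‖ ≤ ‖a‖ * (M/‖b‖) :=
      mul_le_mul_of_nonneg_left h2 (norm_nonneg a)
    refine h3.trans ?_
    have hba : ‖a‖ - 2*M ≤ ‖b‖ := by
      rw [hs_def, mem_closedBall, dist_eq_norm] at hb
      have h1' : ‖a‖ - ‖b‖ ≤ ‖b - a‖ := by
        rw [norm_sub_rev]; exact norm_sub_norm_le a b
      linarith
    rw [show ‖a‖ * (M/‖b‖) = ‖a‖*M/‖b‖ by ring, div_le_iff₀ hbpos]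
    nlinarith [mul_nonneg hM.le (norm_nonneg a), mul_nonneg hR.le hM.le,
      mul_nonneg hM.le hM.le]
  -- derivative bound for Φ on s
  have hΦderiv : ∀ b ∈ s, ‖deriv Φ b‖ ≤ 1/2 := by
    intro b hb
    have hb38 : 2*R + 38*M ≤ ‖b‖ := hs_norm b hb
    have hbpos : 0 < ‖b‖ := by linarith
    have hd1 : DifferentiableAt ℂ (fun w => 1 + e w) b := (heat b hb).const_add 1
    have h1 : deriv Φ b = a * deriv (fun w => 1 + e w) b := by
      rw [hΦ_def]; exact deriv_const_mul a hd1
    have h2 : deriv (fun w => 1 + e w) b = deriv e b := by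
      simpa using deriv_const_add 1 (f := e) (x := b)
    rw [h1, h2, norm_mul]
    have h3 : ‖a‖ * ‖deriv e b‖ ≤ ‖a‖ * (4*M/‖b‖^2) :=
      mul_le_mul_of_nonneg_left (hderiv b hb) (norm_nonneg a)
    refine h3.trans ?_
    -- ‖a‖ ≥ 40M, ‖b‖ ≥ ‖a‖ - 2M ⇒ 4M‖a‖/‖b‖² ≤ 1/2
    have hba : ‖a‖ - 2*M ≤ ‖b‖ := by
      rw [hs_def, mem_closedBall, dist_eq_norm] at hb
      have h1' : ‖a‖ - ‖b‖ ≤ ‖b - a‖ := by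
        rw [norm_sub_rev]; exact norm_sub_norm_le a b
      linarith
    have hb2 : (0:ℝ) < ‖b‖^2 := by positivity
    rw [show ‖a‖ * (4*M/‖b‖^2) = 4*M*‖a‖/‖b‖^2 by ring, div_le_iff₀ hb2]
    have hba0 : (0:ℝ) ≤ ‖a‖ - 2*M := by linarith
    have hsq : (‖a‖-2*M)*(‖a‖-2*M) ≤ ‖b‖*‖b‖ := mul_self_le_mul_self hba0 hba
    have h40 : (2*R+40*M)*‖a‖ ≤ ‖a‖*‖a‖ :=
      mul_le_mul_of_nonneg_right hanorm (norm_nonneg a)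
    nlinarith [mul_nonneg hM.le (norm_nonneg a), mul_nonneg hR.le (norm_nonneg a),
      mul_nonneg hM.le hM.le]
  -- Lipschitz bound
  have hconv : Convex ℝ s := convex_closedBall a (2*M)
  have hlip : LipschitzOnWith (1/2) Φ s := by
    apply hconv.lipschitzOnWith_of_nnnorm_deriv_le
    · intro x hx
      exact ((heat x hx).const_add 1).const_mul a
    · intro x hx
      rw [← NNReal.coe_le_coe, coe_nnnorm]
      simpa using hΦderiv x hx
  have hlip' : LipschitzWith (1/2) (hmaps.restrict Φ s s) := fun x y => by
    simpa [Subtype.edist_eq, MapsTo.val_restrict_apply] using hlip x.2 y.2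
  have hcontract : ContractingWith (1/2) (hmaps.restrict Φ s s) :=
    ⟨by rw [← NNReal.coe_lt_coe]; norm_num, hlip'⟩
  have has : a ∈ s := mem_closedBall_self (by linarith)
  obtain ⟨y, hys, hfix, -, -⟩ :=
    hcontract.exists_fixedPoint' isClosed_closedBall.isComplete hmaps has (edist_ne_top a (Φ a))
  have hyR : R ≤ ‖y‖ := hsR y hys
  have hfy : f y = y := by
    have h1 : a * (1 + (f y - (τ * y + 1))) = y := hfix
    rw [ha] at h1
    field_simp at h1
    linear_combination h1
  refine ⟨y, hyR, hfy, ?_⟩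
  rw [hs_def, mem_closedBall, dist_eq_norm] at hys
  exact hys
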